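/- Assuming Martin's Axiom for σ-centered posets (MA(σ-centered)), there is a mad family ℱ on T of cardinality 𝔠 that is 𝔠-almost decided: for every ℬ ∈ [ℱ]^𝔠, the family of infinite sets almost disjoint from all members of ℬ is exactly the set of infinite members of the ideal generated by ℱ \ ℬ and the finite sets. -/

import Mathlib

open Cardinal Set

/-- The full binary tree `T = 2^{<ω}`, modeled as finite lists of booleans;
`s ≤ t` iff `t` is a prefix of `s` (i.e. `s` extends `t`). -/
abbrev BinTree := List Bool

/-- The restriction `f↾n ∈ 2^{<ω}` of `f ∈ 2^ω`. -/
def restr (f : ℕ → Bool) (n : ℕ) : BinTree := List.ofFn (fun i : Fin n => f i)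

/-- The branch `B(f) = { f↾n : n ∈ ω }` induced by `f ∈ 2^ω`. -/
def branch (f : ℕ → Bool) : Set BinTree := Set.range (restr f)

/-- `⌊X⌋ = { f ∈ 2^ω : |B(f) ∩ X| = ℵ₀ }`. -/
def floorSet (X : Set BinTree) : Set (ℕ → Bool) := {f | (branch f ∩ X).Infinite}

/-- `X` is covered by finitely many branches of `T`. -/
def CoveredByFinitelyManyBranches (X : Set BinTree) : Prop :=
  ∃ s : Finset (ℕ → Bool), X ⊆ ⋃ f ∈ s, branch f

/-- `X` contains no infinite antichain (w.r.t. the prefix/extension order on `T`). -/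
def NoInfiniteAntichain (X : Set BinTree) : Prop :=
  ¬ ∃ A ⊆ X, A.Infinite ∧ IsAntichain (· <+: ·) A

/-- The class `ℬ_T` of infinite subsets of `T` containing no infinite antichain. -/
def Bclass : Set (Set BinTree) := { X | X.Infinite ∧ NoInfiniteAntichain X }

/-- The class `𝒜_T` of infinite antichains of `T`. -/
def Aclass : Set (Set BinTree) := { X | X.Infinite ∧ IsAntichain (· <+: ·) X }

/-- The class `𝒩𝒟_T` of infinite `X ⊆ T` with `⌊X⌋` nowhere dense in Cantor space. -/
def NDclass : Set (Set BinTree) := { X | X.Infinite ∧ IsNowhereDense (floorSet X) }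

/-- `σ` is the standard fair-coin product measure on `2^ω`, characterized as a
probability measure giving each basic clopen set `{ f : f↾ℓ(t) = t }` measure `2^{-ℓ(t)}`. -/
def IsCantorMeasure (σ : MeasureTheory.Measure (ℕ → Bool)) : Prop :=
  MeasureTheory.IsProbabilityMeasure σ ∧
    ∀ t : BinTree, σ { f | restr f t.length = t } = (2 : ENNReal)⁻¹ ^ t.length

/-- The class `𝒩_T` (w.r.t. a measure `σ` on `2^ω`) of infinite `X ⊆ T` with `σ(⌊X⌋) = 0`. -/
def Nclass (σ : MeasureTheory.Measure (ℕ → Bool)) : Set (Set BinTree) :=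
  { X | X.Infinite ∧ σ (floorSet X) = 0 }

/-- Pairwise almost disjoint family of infinite sets. -/
def ADFamily {α : Type*} (F : Set (Set α)) : Prop :=
  (∀ X ∈ F, X.Infinite) ∧ F.Pairwise fun X Y => (X ∩ Y).Finite

/-- `F` is a maximal almost disjoint family within `𝒳`. -/
def MadIn {α : Type*} (𝒳 F : Set (Set α)) : Prop :=
  F ⊆ 𝒳 ∧ ADFamily F ∧ ∀ Y ∈ 𝒳, ∃ X ∈ F, (Y ∩ X).Infinite

/-- The collection `[α]^{ℵ₀}` of all infinite subsets of `α`. -/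
def infSets (α : Type*) : Set (Set α) := { X | X.Infinite }

/-- `𝔞(𝒳)`: the least cardinality of an infinite mad family within `𝒳`. -/
noncomputable def aInv {α : Type*} (𝒳 : Set (Set α)) : Cardinal :=
  sInf { c : Cardinal | ∃ F, F.Infinite ∧ MadIn 𝒳 F ∧ #F = c }

/-- `cov(ℳ)`: the least number of meager subsets of `2^ω` covering `2^ω`. -/
noncomputable def covMeager : Cardinal :=
  sInf { c : Cardinal | ∃ S : Set (Set (ℕ → Bool)),
    (∀ A ∈ S, IsMeagre A) ∧ ⋃₀ S = Set.univ ∧ #S = c }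

/-- `cov(𝒩)`: the least number of `σ`-null subsets of `2^ω` covering `2^ω`. -/
noncomputable def covNull (σ : MeasureTheory.Measure (ℕ → Bool)) : Cardinal :=
  sInf { c : Cardinal | ∃ S : Set (Set (ℕ → Bool)),
    (∀ A ∈ S, σ A = 0) ∧ ⋃₀ S = Set.univ ∧ #S = c }

/-- `F^⊥`: the family of infinite sets almost disjoint from every member of `F`. -/
def perp {α : Type*} (F : Set (Set α)) : Set (Set α) :=
  { Y | Y.Infinite ∧ ∀ X ∈ F, (Y ∩ X).Finite }

/-- Membership in the ideal `ℐ(G)` generated by `G` together with the finite sets: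
`S ⊆* ∪G'` for some finite `G' ⊆ G`. -/
def InIdeal {α : Type*} (G : Set (Set α)) (S : Set α) : Prop :=
  ∃ G' : Finset (Set α), ↑G' ⊆ G ∧ (S \ ⋃₀ ↑G').Finite

/-- `𝔞⁺(F) = 𝔞(F^⊥)`. -/
noncomputable def aPlus {α : Type*} (F : Set (Set α)) : Cardinal := aInv (perp F)

/-- `B` almost decides `F`: `B^⊥` is exactly the family of infinite members of
the ideal generated by `F \ B` and the finite sets. -/
def AlmostDecides {α : Type*} (B F : Set (Set α)) : Prop :=
  perp B = { Y | Y.Infinite ∧ InIdeal (F \ B) Y }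

/-- A subset `C` of a poset is centered: every finite subset of `C` has a common
lower bound. -/
def Centered {P : Type*} [Preorder P] (C : Set P) : Prop :=
  ∀ s : Finset P, ↑s ⊆ C → ∃ p, ∀ q ∈ s, p ≤ q

/-- A poset is σ-centered: it is a countable union of centered subsets. -/
def SigmaCentered (P : Type*) [Preorder P] : Prop :=
  ∃ C : ℕ → Set P, (∀ n, Centered (C n)) ∧ ⋃ n, C n = Set.univ

/-- `D` is dense (below every condition) in the poset `P`. -/
def DenseBelow {P : Type*} [Preorder P] (D : Set P) : Prop :=
  ∀ p : P, ∃ q ∈ D, q ≤ p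

/-- `G` is a filter on the poset `P`. -/
def IsFilterOn {P : Type*} [Preorder P] (G : Set P) : Prop :=
  (∀ p ∈ G, ∀ q, p ≤ q → q ∈ G) ∧ ∀ p ∈ G, ∀ q ∈ G, ∃ r ∈ G, r ≤ p ∧ r ≤ q

/-- Martin's axiom for σ-centered posets: for every nonempty σ-centered poset and
fewer than continuum many dense sets there is a filter meeting them all. -/
def MASigmaCentered : Prop :=
  ∀ (P : Type) (_ : Preorder P) (_ : Nonempty P), SigmaCentered P →
    ∀ 𝒟 : Set (Set P), #𝒟 < Cardinal.continuum → (∀ D ∈ 𝒟, DenseBelow D) →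
      ∃ G : Set P, IsFilterOn G ∧ ∀ D ∈ 𝒟, (G ∩ D).Nonempty
section Stmt19Aux

/-- A set `Z` is *active* w.r.t. a family `𝒜`: removing any finitely many members
of `𝒜` leaves `Z` infinite. -/
def Active19 (Z : Set BinTree) (𝒜 : Set (Set BinTree)) : Prop :=
  ∀ F : Finset (Set BinTree), ↑F ⊆ 𝒜 → (Z \ ⋃₀ ↑F).Infinite

/-- The property of the set added at a recursion stage. -/
def Good19 (𝒜 𝒴 : Set (Set BinTree)) (A : Set BinTree) : Prop :=
  A.Infinite ∧ (∀ X ∈ 𝒜, (A ∩ X).Finite) ∧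
    ∀ Z ∈ 𝒴, (A ∩ Z).Infinite ∧ Active19 Z (insert A 𝒜)

/-- Forcing conditions. -/
structure Cond19 (𝒜 : Set (Set BinTree)) : Type where
  s : Finset BinTree
  bad : Finset (Set BinTree)
  hbad : ↑bad ⊆ 𝒜
  e : Finset BinTree
  hdis : ∀ x ∈ s, x ∉ e

instance Cond19.instPreorder (𝒜 : Set (Set BinTree)) : Preorder (Cond19 𝒜) where
  le p q := q.s ⊆ p.s ∧ q.bad ⊆ p.bad ∧ q.e ⊆ p.e ∧
    ∀ x ∈ p.s, x ∉ q.s → ∀ X ∈ q.bad, x ∉ X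
  le_refl p := ⟨subset_rfl, subset_rfl, subset_rfl, fun x hx hx' => absurd hx hx'⟩
  le_trans p q r h1 h2 := by
    obtain ⟨hs1, hb1, he1, hn1⟩ := h1
    obtain ⟨hs2, hb2, he2, hn2⟩ := h2
    refine ⟨hs2.trans hs1, hb2.trans hb1, he2.trans he1, fun x hx hxr X hX => ?_⟩
    by_cases hxq : x ∈ q.s
    · exact hn2 x hxq hxr X hX
    · exact hn1 x hx hxq X (hb2 hX)

lemma infinite_of_arbitrarily_large {α : Type*} {S : Set α}
    (h : ∀ n : ℕ, ∃ u : Finset α, ↑u ⊆ S ∧ n ≤ u.card) : S.Infinite := by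
  by_contra hfin
  rw [Set.not_infinite] at hfin
  obtain ⟨u, huS, hcard⟩ := h (hfin.toFinset.card + 1)
  have : u ⊆ hfin.toFinset := fun x hx => hfin.mem_toFinset.2 (huS hx)
  have := Finset.card_le_card this
  omega

theorem exists_good19 (hMA : MASigmaCentered) (𝒜 𝒴 : Set (Set BinTree))
    (hA : #𝒜 < Cardinal.continuum) (hY : #𝒴 < Cardinal.continuum)
    (hU : Set.univ ∈ 𝒴) (hact : ∀ Z ∈ 𝒴, Active19 Z 𝒜) :
    ∃ A : Set BinTree, Good19 𝒜 𝒴 A := by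
  classical
  set P := Cond19 𝒜 with hP
  have hne : Nonempty P := ⟨⟨∅, ∅, by simp, ∅, by simp⟩⟩
  -- σ-centeredness
  obtain ⟨g, hg⟩ := exists_surjective_nat (Finset BinTree)
  have hsc : SigmaCentered P := by
    refine ⟨fun n => {p | p.s = g n}, fun n t ht => ?_, ?_⟩
    · refine ⟨⟨g n, t.sup Cond19.bad, ?_, t.sup Cond19.e, ?_⟩, fun q hq => ?_⟩
      · intro X hX
        obtain ⟨p, _, hXp⟩ := Finset.mem_sup.1 (Finset.mem_coe.1 hX)
        exact p.hbad hXp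
      · intro x hx hxe
        obtain ⟨p, hp, hxp⟩ := Finset.mem_sup.1 hxe
        exact p.hdis x ((ht hp) ▸ hx) hxp
      · have hqs : q.s = g n := ht hq
        exact ⟨by rw [hqs], Finset.le_sup hq, Finset.le_sup hq,
          fun x hx hxq => absurd (by rw [hqs]; exact hx) hxq⟩
    · ext p
      simp only [Set.mem_iUnion, Set.mem_setOf_eq, Set.mem_univ, iff_true]
      obtain ⟨n, hn⟩ := hg p.s
      exact ⟨n, hn.symm⟩
  -- dense sets
  set D1 : Set BinTree → Set P := fun X => {p | X ∈ p.bad} with hD1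
  set D2 : Set BinTree → ℕ → Set P :=
    fun Z n => {p | ∃ u : Finset BinTree, u ⊆ p.s ∧ ↑u ⊆ Z ∧ n ≤ u.card} with hD2
  set D3 : Set BinTree → Finset (Set BinTree) → ℕ → Set P :=
    fun Z F n => {p | ∃ u : Finset BinTree, u ⊆ p.e ∧ ↑u ⊆ Z \ ⋃₀ ↑F ∧ n ≤ u.card} with hD3
  set ID := (↥𝒜 ⊕ (↥𝒴 × ℕ ⊕ ↥𝒴 × {F : Finset (Set BinTree) // ↑F ⊆ 𝒜} × ℕ)) with hID
  set dfun : ID → Set P := fun i => match i with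
    | .inl X => D1 ↑X
    | .inr (.inl (Z, n)) => D2 ↑Z n
    | .inr (.inr (Z, F, n)) => D3 ↑Z ↑F n
    with hdfun
  set 𝒟 : Set (Set P) := Set.range dfun with h𝒟
  have hℵ : Cardinal.aleph0 < Cardinal.continuum := Cardinal.aleph0_lt_continuum
  have hcard : #𝒟 < Cardinal.continuum := by
    refine lt_of_le_of_lt Cardinal.mk_range_le ?_
    have hFsub : #{F : Finset (Set BinTree) // ↑F ⊆ 𝒜} < Cardinal.continuum := by
      have hinj : Function.Injective
          (fun F : {F : Finset (Set BinTree) // ↑F ⊆ 𝒜} => F.1.subtype (· ∈ 𝒜)) := by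
        intro F1 F2 h
        apply Subtype.ext
        have h1 := congrArg (Finset.map (Function.Embedding.subtype (· ∈ 𝒜))) h
        rwa [Finset.subtype_map_of_mem (fun x hx => F1.2 hx),
          Finset.subtype_map_of_mem (fun x hx => F2.2 hx)] at h1
      refine lt_of_le_of_lt (Cardinal.mk_le_of_injective hinj) ?_
      rcases finite_or_infinite ↥𝒜 with hfin | hinf
      · haveI := Fintype.ofFinite ↥𝒜
        exact lt_trans (Cardinal.lt_aleph0_of_finite _) hℵ
      · rwa [Cardinal.mk_finset_of_infinite]
    have : #ID = #𝒜 + (#𝒴 * Cardinal.aleph0 +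
        #𝒴 * (#{F : Finset (Set BinTree) // ↑F ⊆ 𝒜} * Cardinal.aleph0)) := by
      simp [hID, Cardinal.mk_prod, Cardinal.lift_id, Cardinal.mk_nat, mul_assoc]
    rw [this]
    refine Cardinal.add_lt_of_lt Cardinal.aleph0_le_continuum hA
      (Cardinal.add_lt_of_lt Cardinal.aleph0_le_continuum ?_ ?_)
    · exact Cardinal.mul_lt_of_lt Cardinal.aleph0_le_continuum hY hℵ
    · exact Cardinal.mul_lt_of_lt Cardinal.aleph0_le_continuum hY
        (Cardinal.mul_lt_of_lt Cardinal.aleph0_le_continuum hFsub hℵ)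
  have hdense : ∀ D ∈ 𝒟, DenseBelow D := by
    rintro D ⟨i, rfl⟩
    match i with
    | .inl X =>
      intro q
      refine ⟨⟨q.s, insert ↑X q.bad, ?_, q.e, q.hdis⟩, Finset.mem_insert_self _ _,
        subset_rfl, Finset.subset_insert _ _, subset_rfl, fun x hx hx' => absurd hx hx'⟩
      rw [Finset.coe_insert]
      exact Set.insert_subset X.2 q.hbad
    | .inr (.inl (Z, n)) =>
      intro q
      have h1 : ((Z.1 \ ⋃₀ ↑q.bad) \ ↑q.e).Infinite :=
        (hact Z.1 Z.2 q.bad q.hbad).diff q.e.finite_toSet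
      obtain ⟨u, hu1, hu2⟩ := h1.exists_subset_card_eq n
      refine ⟨⟨q.s ∪ u, q.bad, q.hbad, q.e, ?_⟩,
        ⟨u, Finset.subset_union_right, fun x hx => (hu1 hx).1.1, hu2.ge⟩,
        Finset.subset_union_left, subset_rfl, subset_rfl, ?_⟩
      · intro x hx hxe
        rcases Finset.mem_union.1 hx with h | h
        · exact q.hdis x h hxe
        · exact (hu1 h).2 hxe
      · intro x hx hxq X hX hxX
        rcases Finset.mem_union.1 hx with h | h
        · exact hxq h
        · exact (hu1 h).1.2 ⟨X, hX, hxX⟩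
    | .inr (.inr (Z, F, n)) =>
      intro q
      have h1 : ((Z.1 \ ⋃₀ ↑F.1) \ ↑q.s).Infinite :=
        (hact Z.1 Z.2 F.1 F.2).diff q.s.finite_toSet
      obtain ⟨u, hu1, hu2⟩ := h1.exists_subset_card_eq n
      refine ⟨⟨q.s, q.bad, q.hbad, q.e ∪ u, ?_⟩,
        ⟨u, Finset.subset_union_right, fun x hx => (hu1 hx).1, hu2.ge⟩,
        subset_rfl, subset_rfl, Finset.subset_union_left, fun x hx hx' => absurd hx hx'⟩
      intro x hx hxe
      rcases Finset.mem_union.1 hxe with h | h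
      · exact q.hdis x hx h
      · exact (hu1 h).2 hx
  obtain ⟨G, hGfil, hGmeet⟩ := hMA P inferInstance hne hsc 𝒟 hcard hdense
  set A : Set BinTree := {x | ∃ p ∈ G, x ∈ p.s} with hAdef
  have f2 : ∀ p ∈ G, ∀ x, x ∈ A → x ∉ p.s → ∀ X ∈ p.bad, x ∉ X := by
    rintro p hp x ⟨q, hq, hxq⟩ hxp X hX
    obtain ⟨r, hr, hrp, hrq⟩ := hGfil.2 p hp q hq
    exact hrp.2.2.2 x (hrq.1 hxq) hxp X hX
  have f3 : ∀ p ∈ G, ∀ x ∈ p.e, x ∉ A := by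
    rintro p hp x hxe ⟨q, hq, hxq⟩
    obtain ⟨r, hr, hrp, hrq⟩ := hGfil.2 p hp q hq
    exact r.hdis x (hrq.1 hxq) (hrp.2.2.1 hxe)
  have h2 : ∀ X ∈ 𝒜, (A ∩ X).Finite := by
    intro X hX
    obtain ⟨p, hpG, hpD⟩ := hGmeet (D1 X) ⟨.inl ⟨X, hX⟩, rfl⟩
    refine p.s.finite_toSet.subset ?_
    rintro x ⟨hxA, hxX⟩
    by_contra hxp
    exact f2 p hpG x hxA hxp X hpD hxX
  have h3 : ∀ Z ∈ 𝒴, (A ∩ Z).Infinite := by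
    intro Z hZ
    apply infinite_of_arbitrarily_large
    intro n
    obtain ⟨p, hpG, u, hu1, hu2, hu3⟩ := hGmeet (D2 Z n) ⟨.inr (.inl (⟨Z, hZ⟩, n)), rfl⟩
    exact ⟨u, fun x hx => ⟨⟨p, hpG, hu1 hx⟩, hu2 hx⟩, hu3⟩
  have h4 : ∀ Z ∈ 𝒴, ∀ F : Finset (Set BinTree), ↑F ⊆ 𝒜 →
      ((Z \ ⋃₀ ↑F) \ A).Infinite := by
    intro Z hZ F hF
    apply infinite_of_arbitrarily_large
    intro n
    obtain ⟨p, hpG, u, hu1, hu2, hu3⟩ :=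
      hGmeet (D3 Z F n) ⟨.inr (.inr (⟨Z, hZ⟩, ⟨F, hF⟩, n)), rfl⟩
    exact ⟨u, fun x hx => ⟨hu2 hx, f3 p hpG x (hu1 hx)⟩, hu3⟩
  have h1 : A.Infinite := by
    have := h3 Set.univ hU
    rwa [Set.inter_univ] at this
  refine ⟨A, h1, h2, fun Z hZ => ⟨h3 Z hZ, fun F hF => ?_⟩⟩
  have hsub : ↑(F.erase A) ⊆ 𝒜 := by
    intro X hX
    obtain ⟨hXA, hXF⟩ := Finset.mem_erase.1 (Finset.mem_coe.1 hX)
    rcases hF (Finset.mem_coe.2 hXF) with h | h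
    · exact absurd h hXA
    · exact h
  refine ((h4 Z hZ (F.erase A) hsub).mono ?_)
  rintro x ⟨⟨hxZ, hx1⟩, hx2⟩
  refine ⟨hxZ, ?_⟩
  rintro ⟨X, hXF, hxX⟩
  by_cases hXA : X = A
  · exact hx2 (hXA ▸ hxX)
  · exact hx1 ⟨X, Finset.mem_coe.2 (Finset.mem_erase.2 ⟨hXA, Finset.mem_coe.1 hXF⟩), hxX⟩

end Stmt19Aux
section Stmt19Rec

open scoped Classical

abbrev Idx19 : Type := Cardinal.continuum.ord.ToType

instance : Nonempty Idx19 :=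
  Ordinal.toType_nonempty_iff_ne_zero.2
    (fun h => Cardinal.continuum_ne_zero (by rwa [Cardinal.ord_eq_zero] at h))

noncomputable def stepf19 (Yf : Idx19 → Set BinTree) (i : Idx19)
    (rec : ∀ j : Idx19, j < i → Set BinTree) : Set BinTree :=
  if h : ∃ A, Good19 {X | ∃ j : Idx19, ∃ h : j < i, rec j h = X}
      {Z | Active19 Z {X | ∃ j : Idx19, ∃ h : j < i, rec j h = X} ∧
        (Z = Set.univ ∨ ∃ j ≤ i, Yf j = Z)} A then h.choose else ∅

noncomputable def AF19 (Yf : Idx19 → Set BinTree) : Idx19 → Set BinTree :=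
  (wellFounded_lt (α := Idx19)).fix (stepf19 Yf)

def FamAt19 (Yf : Idx19 → Set BinTree) (i : Idx19) : Set (Set BinTree) :=
  {X | ∃ j : Idx19, ∃ _ : j < i, AF19 Yf j = X}

def YsAt19 (Yf : Idx19 → Set BinTree) (i : Idx19) : Set (Set BinTree) :=
  {Z | Active19 Z (FamAt19 Yf i) ∧ (Z = Set.univ ∨ ∃ j ≤ i, Yf j = Z)}

lemma AF19_eq (Yf : Idx19 → Set BinTree) (i : Idx19) : AF19 Yf i =
    if h : ∃ A, Good19 (FamAt19 Yf i) (YsAt19 Yf i) A then h.choose else ∅ := by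
  rw [AF19, WellFounded.fix_eq]
  rfl

lemma mk_Idx19 : #Idx19 = Cardinal.continuum := by
  rw [Cardinal.mk_toType, Cardinal.card_ord]

lemma mk_Iio_Idx19 (i : Idx19) : #(Set.Iio i) < Cardinal.continuum :=
  Cardinal.mk_Iio_ord_toType i

lemma mk_FamAt19 (Yf : Idx19 → Set BinTree) (i : Idx19) :
    #(FamAt19 Yf i) < Cardinal.continuum := by
  have heq : FamAt19 Yf i = AF19 Yf '' Set.Iio i := by
    ext X
    simp only [FamAt19, Set.mem_setOf_eq, Set.mem_image, Set.mem_Iio]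
    exact ⟨fun ⟨j, hj, he⟩ => ⟨j, hj, he⟩, fun ⟨j, hj, he⟩ => ⟨j, hj, he⟩⟩
  rw [heq]
  exact lt_of_le_of_lt Cardinal.mk_image_le (mk_Iio_Idx19 i)

lemma mk_YsAt19 (Yf : Idx19 → Set BinTree) (i : Idx19) :
    #(YsAt19 Yf i) < Cardinal.continuum := by
  have hsub : YsAt19 Yf i ⊆ insert Set.univ (Yf '' Set.Iic i) := by
    rintro Z ⟨_, rfl | ⟨j, hj, he⟩⟩
    · exact Set.mem_insert _ _
    · exact Set.mem_insert_of_mem _ ⟨j, hj, he⟩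
  have h1 : #(Yf '' Set.Iic i) < Cardinal.continuum := by
    refine lt_of_le_of_lt Cardinal.mk_image_le ?_
    have : Set.Iic i = insert i (Set.Iio i) := Set.Iio_insert.symm
    rw [this]
    refine lt_of_le_of_lt Cardinal.mk_insert_le ?_
    exact Cardinal.add_lt_of_lt Cardinal.aleph0_le_continuum (mk_Iio_Idx19 i)
      (lt_trans Cardinal.one_lt_aleph0 Cardinal.aleph0_lt_continuum)
  refine lt_of_le_of_lt (Cardinal.mk_le_mk_of_subset hsub) ?_
  refine lt_of_le_of_lt Cardinal.mk_insert_le ?_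
  exact Cardinal.add_lt_of_lt Cardinal.aleph0_le_continuum h1
    (lt_trans Cardinal.one_lt_aleph0 Cardinal.aleph0_lt_continuum)

lemma exists_stage_bound19 (Yf : Idx19 → Set BinTree) {i : Idx19}
    {F : Finset (Set BinTree)} (hF : ↑F ⊆ FamAt19 Yf i) (hne : F.Nonempty) :
    ∃ j, j < i ∧ ↑F ⊆ insert (AF19 Yf j) (FamAt19 Yf j) := by
  have h : ∀ X ∈ F, ∃ j : Idx19, j < i ∧ AF19 Yf j = X := by
    intro X hX
    obtain ⟨j, hj, he⟩ := hF (Finset.mem_coe.2 hX)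
    exact ⟨j, hj, he⟩
  choose! f hf1 hf2 using h
  have hji : F.sup' hne f < i := (Finset.sup'_lt_iff hne).2 (fun X hX => hf1 X hX)
  refine ⟨F.sup' hne f, hji, fun X hX => ?_⟩
  have hXF : X ∈ F := Finset.mem_coe.1 hX
  have hle : f X ≤ F.sup' hne f := Finset.le_sup' f hXF
  rcases lt_or_eq_of_le hle with hlt | heq
  · exact Set.mem_insert_of_mem _ ⟨f X, hlt, hf2 X hXF⟩
  · have h2 := hf2 X hXF
    rw [heq] at h2
    rw [← h2]
    exact Set.mem_insert _ _

theorem main_inv19 (hMA : MASigmaCentered) (Yf : Idx19 → Set BinTree) :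
    ∀ i : Idx19, Active19 Set.univ (FamAt19 Yf i) ∧
      Good19 (FamAt19 Yf i) (YsAt19 Yf i) (AF19 Yf i) := by
  intro i
  refine (wellFounded_lt (α := Idx19)).induction
    (C := fun i => Active19 Set.univ (FamAt19 Yf i) ∧
      Good19 (FamAt19 Yf i) (YsAt19 Yf i) (AF19 Yf i)) i ?_
  intro i IH
  have hactU : Active19 Set.univ (FamAt19 Yf i) := by
    intro F hF
    rcases F.eq_empty_or_nonempty with rfl | hne
    · simpa using Set.infinite_univ (α := BinTree)
    · obtain ⟨j, hj, hsub⟩ := exists_stage_bound19 Yf hF hne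
      have hU : Set.univ ∈ YsAt19 Yf j := ⟨(IH j hj).1, Or.inl rfl⟩
      exact ((IH j hj).2.2.2 Set.univ hU).2 F hsub
  have hex : ∃ A, Good19 (FamAt19 Yf i) (YsAt19 Yf i) A :=
    exists_good19 hMA _ _ (mk_FamAt19 Yf i) (mk_YsAt19 Yf i)
      ⟨hactU, Or.inl rfl⟩ (fun Z hZ => hZ.1)
  refine ⟨hactU, ?_⟩
  rw [AF19_eq, dif_pos hex]
  exact hex.choose_spec

theorem pres19 (hMA : MASigmaCentered) (Yf : Idx19 → Set BinTree) (Z : Set BinTree)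
    (α : Idx19) (hcand : Z = Set.univ ∨ ∃ β ≤ α, Yf β = Z)
    (hbase : Active19 Z (FamAt19 Yf α)) :
    ∀ i, α ≤ i → Active19 Z (FamAt19 Yf i) := by
  intro i
  refine (wellFounded_lt (α := Idx19)).induction
    (C := fun i => α ≤ i → Active19 Z (FamAt19 Yf i)) i ?_
  intro i IH hαi F hF
  rcases F.eq_empty_or_nonempty with rfl | hne
  · simpa using hbase ∅ (by simp)
  obtain ⟨j, hj, hsub⟩ := exists_stage_bound19 Yf hF hne
  rcases le_or_gt α j with hαj | hjα
  · have hactZ : Active19 Z (FamAt19 Yf j) := IH j hj hαj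
    have hZY : Z ∈ YsAt19 Yf j :=
      ⟨hactZ, hcand.imp id (fun ⟨β, hβ, e⟩ => ⟨β, hβ.trans hαj, e⟩)⟩
    exact ((main_inv19 hMA Yf j).2.2.2 Z hZY).2 F hsub
  · apply hbase F
    refine hsub.trans ?_
    intro X hX
    rcases Set.mem_insert_iff.1 hX with rfl | hX
    · exact ⟨j, hjα, rfl⟩
    · obtain ⟨k, hk, hke⟩ := hX
      exact ⟨k, hk.trans hjα, hke⟩

end Stmt19Rec
section Stmt19Main

open scoped Classical

theorem stmt19' (hMA : MASigmaCentered) :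
    ∃ F : Set (Set BinTree), MadIn (infSets BinTree) F ∧ #F = Cardinal.continuum ∧
      ∀ B ⊆ F, #B = Cardinal.continuum → AlmostDecides B F := by
  classical
  -- an enumeration of all infinite subsets of `BinTree` by `Idx19`
  have hsub : #{Z : Set BinTree // Z.Infinite} ≤ #Idx19 := by
    rw [mk_Idx19]
    calc #{Z : Set BinTree // Z.Infinite} ≤ #(Set BinTree) := Cardinal.mk_subtype_le _
      _ = 2 ^ (#BinTree) := Cardinal.mk_set
      _ = Cardinal.continuum := by
          rw [Cardinal.mk_eq_aleph0 BinTree, Cardinal.two_power_aleph0]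
  obtain ⟨emb⟩ := (Cardinal.le_def _ _).1 hsub
  haveI : Nonempty {Z : Set BinTree // Z.Infinite} := ⟨⟨Set.univ, Set.infinite_univ⟩⟩
  set Yf : Idx19 → Set BinTree := fun i => ((Function.invFun emb) i).1 with hYfdef
  have hYf : ∀ Z : Set BinTree, Z.Infinite → ∃ α, Yf α = Z := by
    intro Z hZ
    refine ⟨emb ⟨Z, hZ⟩, ?_⟩
    have := Function.leftInverse_invFun emb.injective ⟨Z, hZ⟩
    rw [hYfdef]
    simp only [this]
  -- the mad family
  have hGood : ∀ i, Good19 (FamAt19 Yf i) (YsAt19 Yf i) (AF19 Yf i) :=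
    fun i => (main_inv19 hMA Yf i).2
  have hInf : ∀ i, (AF19 Yf i).Infinite := fun i => (hGood i).1
  have hAD : ∀ i j, j < i → (AF19 Yf i ∩ AF19 Yf j).Finite :=
    fun i j hj => (hGood i).2.1 _ ⟨j, hj, rfl⟩
  have hADall : ∀ i j, i ≠ j → (AF19 Yf i ∩ AF19 Yf j).Finite := by
    intro i j hij
    rcases lt_or_gt_of_ne hij with h | h
    · rw [Set.inter_comm]; exact hAD j i h
    · exact hAD i j h
  have hinj : Function.Injective (AF19 Yf) := by
    intro i j h
    by_contra hne
    have hfin := hADall i j hne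
    rw [h, Set.inter_self] at hfin
    exact hfin.not_infinite (hInf j)
  have hFamSub : ∀ α, FamAt19 Yf α ⊆ Set.range (AF19 Yf) := by
    rintro α X ⟨j, hj, rfl⟩
    exact ⟨j, rfl⟩
  refine ⟨Set.range (AF19 Yf), ⟨?_, ⟨?_, ?_⟩, ?_⟩, ?_, ?_⟩
  · -- range ⊆ infSets
    rintro X ⟨i, rfl⟩
    exact hInf i
  · -- all infinite
    rintro X ⟨i, rfl⟩
    exact hInf i
  · -- pairwise ad
    rintro X ⟨i, rfl⟩ Y ⟨j, rfl⟩ hne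
    exact hADall i j (fun h => hne (by rw [h]))
  · -- maximality
    intro Y hY
    have hYinf : Y.Infinite := hY
    obtain ⟨α, hα⟩ := hYf Y hYinf
    by_cases hact : Active19 Y (FamAt19 Yf α)
    · have hmem : Y ∈ YsAt19 Yf α := ⟨hact, Or.inr ⟨α, le_refl α, hα⟩⟩
      exact ⟨AF19 Yf α, ⟨α, rfl⟩,
        by rw [Set.inter_comm]; exact ((main_inv19 hMA Yf α).2.2.2 Y hmem).1⟩
    · unfold Active19 at hact
      push_neg at hact
      obtain ⟨G, hGsub, hGfin⟩ := hact
      have hYsplit : (Y ∩ ⋃₀ ↑G).Infinite := by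
        refine ((hYinf.diff hGfin).mono ?_)
        rintro x ⟨hx1, hx2⟩
        simp only [Set.mem_diff, not_and, not_not] at hx2
        exact ⟨hx1, hx2 hx1⟩
      by_contra hno
      push_neg at hno
      have hfin : ∀ X ∈ (↑G : Set (Set BinTree)), (Y ∩ X).Finite := by
        intro X hX
        exact hno X (hFamSub α (hGsub hX))
      have : (Y ∩ ⋃₀ ↑G).Finite := by
        rw [Set.sUnion_eq_biUnion, Set.inter_iUnion₂]
        exact Set.Finite.biUnion G.finite_toSet hfin
      exact this.not_infinite hYsplit
  · -- cardinality
    rw [Cardinal.mk_range_eq _ hinj, mk_Idx19]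
  · -- almost decided
    intro B hB hBcard
    apply Set.eq_of_subset_of_subset
    · -- perp B ⊆ ideal
      rintro Y ⟨hYinf, hYB⟩
      refine ⟨hYinf, ?_⟩
      obtain ⟨α, hα⟩ := hYf Y hYinf
      have hnact : ¬ Active19 Y (FamAt19 Yf α) := by
        intro hact
        have hmeets : ∀ i, α ≤ i → (AF19 Yf i ∩ Y).Infinite := by
          intro i hi
          have ha : Active19 Y (FamAt19 Yf i) :=
            pres19 hMA Yf Y α (Or.inr ⟨α, le_refl _, hα⟩) hact i hi
          exact ((main_inv19 hMA Yf i).2.2.2 Y ⟨ha, Or.inr ⟨α, hi, hα⟩⟩).1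
        have hBsub : B ⊆ AF19 Yf '' Set.Iio α := by
          intro X hXB
          obtain ⟨i, rfl⟩ := hB hXB
          refine ⟨i, ?_, rfl⟩
          by_contra hi
          rw [Set.mem_Iio, not_lt] at hi
          exact absurd (hmeets i hi)
            (Set.not_infinite.2 (by rw [Set.inter_comm]; exact hYB _ hXB))
        have hle : #B ≤ #(Set.Iio α) :=
          le_trans (Cardinal.mk_le_mk_of_subset hBsub) Cardinal.mk_image_le
        rw [hBcard] at hle
        exact absurd (lt_of_le_of_lt hle (mk_Iio_Idx19 α)) (lt_irrefl _)
      unfold Active19 at hnact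
      push_neg at hnact
      obtain ⟨G, hGsub, hGfin⟩ := hnact
      refine ⟨G.filter (· ∉ B), ?_, ?_⟩
      · intro X hX
        have hX' := Finset.mem_filter.1 (Finset.mem_coe.1 hX)
        exact ⟨hFamSub α (hGsub (Finset.mem_coe.2 hX'.1)), hX'.2⟩
      · have hsubset : Y \ ⋃₀ ↑(G.filter (· ∉ B)) ⊆
            (Y \ ⋃₀ ↑G) ∪ ⋃ X ∈ (↑(G.filter (· ∈ B)) : Set (Set BinTree)), Y ∩ X := by
          rintro x ⟨hxY, hx⟩
          by_cases hxG : x ∈ ⋃₀ (↑G : Set (Set BinTree))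
          · obtain ⟨X, hXG, hxX⟩ := hxG
            by_cases hXB : X ∈ B
            · right
              exact Set.mem_biUnion
                (Finset.mem_coe.2 (Finset.mem_filter.2 ⟨Finset.mem_coe.1 hXG, hXB⟩))
                ⟨hxY, hxX⟩
            · exact absurd ⟨X, Finset.mem_coe.2
                (Finset.mem_filter.2 ⟨Finset.mem_coe.1 hXG, hXB⟩), hxX⟩ hx
          · left
            exact ⟨hxY, hxG⟩
        refine Set.Finite.subset (Set.Finite.union hGfin ?_) hsubset
        refine Set.Finite.biUnion (Finset.finite_toSet _) ?_
        intro X hX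
        exact hYB X (Finset.mem_filter.1 (Finset.mem_coe.1 hX)).2
    · -- ideal ⊆ perp B
      rintro Y ⟨hYinf, G', hG'sub, hG'fin⟩
      refine ⟨hYinf, fun X hXB => ?_⟩
      have hcover : Y ∩ X ⊆
          (Y \ ⋃₀ ↑G') ∪ ⋃ W ∈ (↑G' : Set (Set BinTree)), X ∩ W := by
        rintro x ⟨hxY, hxX⟩
        by_cases h : x ∈ ⋃₀ (↑G' : Set (Set BinTree))
        · obtain ⟨W, hW, hxW⟩ := h
          right
          exact Set.mem_biUnion hW ⟨hxX, hxW⟩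
        · left
          exact ⟨hxY, h⟩
      refine Set.Finite.subset (Set.Finite.union hG'fin
        (Set.Finite.biUnion (G'.finite_toSet) fun W hW => ?_)) hcover
      obtain ⟨i, rfl⟩ := hB hXB
      obtain ⟨⟨j, rfl⟩, hWnB⟩ := hG'sub hW
      exact hADall i j (fun h => hWnB (h ▸ hXB))

end Stmt19Main

/-- Under `MA(σ-centered)` there is a mad family `F` on `T` of size `𝔠` that is
`𝔠`-almost decided. -/
theorem stmt19 (hMA : MASigmaCentered) :
    ∃ F : Set (Set BinTree), MadIn (infSets BinTree) F ∧ #F = Cardinal.continuum ∧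
      ∀ B ⊆ F, #B = Cardinal.continuum → AlmostDecides B F := by
  exact stmt19' hMA
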